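/- (One-step min-max optimality) Let ε > 0, S : {−1,1} → ℝ, and let h₁, h₂ : [−1,1] → ℝ be continuously differentiable. Suppose h₁(−1) > (ε/2)(S(−1) − S(1)) > h₁(1) and h₁′(f) + ε|h₂′(f)| < 0 for all f ∈ [−1,1]. Then the quantity M := min_{|f|≤1} max_{b=±1} { b h₁(f) + ε(S(b) + h₂(f)) } is attained at some f* ∈ [−1,1] satisfying h₁(f*) = (ε/2)(S(−1) − S(1)), and M = ε h₂(f*) + (ε/2)(S(1) + S(−1)). -/

import Mathlib

/-- one-step min–max optimality, Lemma 3.3: under the strict ordering and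
derivative conditions, the min–max `M = min_{|f|≤1} max_{b=±1} {b h₁(f) + ε(S(b) + h₂(f))}`
is attained at some `f* ∈ [-1,1]` equalizing the two payoffs, with
`h₁(f*) = (ε/2)(S(-1) - S(1))` and `M = ε h₂(f*) + (ε/2)(S(1) + S(-1))`. -/
theorem stmt7 (ε : ℝ) (hε : 0 < ε) (S : Bool → ℝ) (h₁ h₂ : ℝ → ℝ)
    (h₁smooth : ContDiffOn ℝ 1 h₁ (Set.Icc (-1) 1))
    (h₂smooth : ContDiffOn ℝ 1 h₂ (Set.Icc (-1) 1))
    (hord₁ : ε / 2 * (S false - S true) < h₁ (-1))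
    (hord₂ : h₁ 1 < ε / 2 * (S false - S true))
    (hder : ∀ f ∈ Set.Icc (-1:ℝ) 1,
      derivWithin h₁ (Set.Icc (-1) 1) f + ε * |derivWithin h₂ (Set.Icc (-1) 1) f| < 0) :
    ∃ fstar ∈ Set.Icc (-1:ℝ) 1,
      h₁ fstar = ε / 2 * (S false - S true) ∧
      max (h₁ fstar + ε * (S true + h₂ fstar)) (-h₁ fstar + ε * (S false + h₂ fstar))
        = (⨅ f : Set.Icc (-1:ℝ) 1,
            max (h₁ f + ε * (S true + h₂ f)) (-h₁ f + ε * (S false + h₂ f))) ∧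
      (⨅ f : Set.Icc (-1:ℝ) 1,
          max (h₁ f + ε * (S true + h₂ f)) (-h₁ f + ε * (S false + h₂ f)))
        = ε * h₂ fstar + ε / 2 * (S true + S false) := by
  have hcont₁ : ContinuousOn h₁ (Set.Icc (-1:ℝ) 1) := h₁smooth.continuousOn
  have hcont₂ : ContinuousOn h₂ (Set.Icc (-1:ℝ) 1) := h₂smooth.continuousOn
  -- find fstar by IVT
  obtain ⟨fstar, hfmem, hfval⟩ : ∃ x ∈ Set.Icc (-1:ℝ) 1,
      h₁ x = ε / 2 * (S false - S true) := by
    have hiv := intermediate_value_Icc' (by norm_num : (-1:ℝ) ≤ 1) hcont₁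
    obtain ⟨x, hx, hx'⟩ := hiv ⟨hord₂.le, hord₁.le⟩
    exact ⟨x, hx, hx'⟩
  have hdiff₁ := h₁smooth.differentiableOn one_ne_zero
  have hdiff₂ := h₂smooth.differentiableOn one_ne_zero
  have key : ∀ x ∈ interior (Set.Icc (-1:ℝ) 1),
      HasDerivAt h₁ (derivWithin h₁ (Set.Icc (-1:ℝ) 1) x) x ∧
      HasDerivAt h₂ (derivWithin h₂ (Set.Icc (-1:ℝ) 1) x) x := by
    intro x hx
    have hnhds : Set.Icc (-1:ℝ) 1 ∈ nhds x := mem_interior_iff_mem_nhds.mp hx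
    have hxm : x ∈ Set.Icc (-1:ℝ) 1 := interior_subset hx
    exact ⟨((hdiff₁ x hxm).hasDerivWithinAt).hasDerivAt hnhds,
           ((hdiff₂ x hxm).hasDerivWithinAt).hasDerivAt hnhds⟩
  have keyP : ∀ x ∈ interior (Set.Icc (-1:ℝ) 1),
      HasDerivAt (fun f => h₁ f + ε * (S true + h₂ f))
        (derivWithin h₁ (Set.Icc (-1:ℝ) 1) x + ε * derivWithin h₂ (Set.Icc (-1:ℝ) 1) x) x := by
    intro x hx
    exact (key x hx).1.add (((key x hx).2.const_add (S true)).const_mul ε)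
  have keyM : ∀ x ∈ interior (Set.Icc (-1:ℝ) 1),
      HasDerivAt (fun f => -h₁ f + ε * (S false + h₂ f))
        (-derivWithin h₁ (Set.Icc (-1:ℝ) 1) x + ε * derivWithin h₂ (Set.Icc (-1:ℝ) 1) x) x := by
    intro x hx
    exact (key x hx).1.neg.add (((key x hx).2.const_add (S false)).const_mul ε)
  -- Antitone / monotone
  have hanti : AntitoneOn (fun f => h₁ f + ε * (S true + h₂ f)) (Set.Icc (-1:ℝ) 1) := by
    apply antitoneOn_of_deriv_nonpos (convex_Icc _ _)
    · exact hcont₁.add (continuousOn_const.mul (continuousOn_const.add hcont₂))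
    · intro x hx
      exact ((keyP x hx).differentiableAt).differentiableWithinAt
    · intro x hx
      rw [(keyP x hx).deriv]
      have h := hder x (interior_subset hx)
      have h2 : derivWithin h₂ (Set.Icc (-1:ℝ) 1) x ≤ |derivWithin h₂ (Set.Icc (-1:ℝ) 1) x| :=
        le_abs_self _
      nlinarith
  have hmono : MonotoneOn (fun f => -h₁ f + ε * (S false + h₂ f)) (Set.Icc (-1:ℝ) 1) := by
    apply monotoneOn_of_deriv_nonneg (convex_Icc _ _)
    · exact hcont₁.neg.add (continuousOn_const.mul (continuousOn_const.add hcont₂))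
    · intro x hx
      exact ((keyM x hx).differentiableAt).differentiableWithinAt
    · intro x hx
      rw [(keyM x hx).deriv]
      have h := hder x (interior_subset hx)
      have h2 : -|derivWithin h₂ (Set.Icc (-1:ℝ) 1) x| ≤ derivWithin h₂ (Set.Icc (-1:ℝ) 1) x :=
        neg_abs_le _
      nlinarith
  -- equalization at fstar
  have heq : h₁ fstar + ε * (S true + h₂ fstar) = -h₁ fstar + ε * (S false + h₂ fstar) := by
    rw [hfval]; ring
  have hMstar : max (h₁ fstar + ε * (S true + h₂ fstar))
      (-h₁ fstar + ε * (S false + h₂ fstar)) = h₁ fstar + ε * (S true + h₂ fstar) := by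
    rw [heq, max_self]
  -- lower bound
  have hlb : ∀ x ∈ Set.Icc (-1:ℝ) 1,
      max (h₁ fstar + ε * (S true + h₂ fstar)) (-h₁ fstar + ε * (S false + h₂ fstar))
        ≤ max (h₁ x + ε * (S true + h₂ x)) (-h₁ x + ε * (S false + h₂ x)) := by
    intro x hx
    rcases le_total x fstar with hle | hle
    · calc max (h₁ fstar + ε * (S true + h₂ fstar)) (-h₁ fstar + ε * (S false + h₂ fstar))
          = h₁ fstar + ε * (S true + h₂ fstar) := hMstar
        _ ≤ h₁ x + ε * (S true + h₂ x) := hanti hx hfmem hle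
        _ ≤ _ := le_max_left _ _
    · calc max (h₁ fstar + ε * (S true + h₂ fstar)) (-h₁ fstar + ε * (S false + h₂ fstar))
          = -h₁ fstar + ε * (S false + h₂ fstar) := by rw [hMstar, heq]
        _ ≤ -h₁ x + ε * (S false + h₂ x) := hmono hfmem hx hle
        _ ≤ _ := le_max_right _ _
  have hbdd : BddBelow (Set.range fun f : Set.Icc (-1:ℝ) 1 =>
      max (h₁ f + ε * (S true + h₂ f)) (-h₁ f + ε * (S false + h₂ f))) := by
    refine ⟨max (h₁ fstar + ε * (S true + h₂ fstar)) (-h₁ fstar + ε * (S false + h₂ fstar)), ?_⟩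
    rintro _ ⟨x, rfl⟩
    exact hlb x x.2
  have hinf : max (h₁ fstar + ε * (S true + h₂ fstar)) (-h₁ fstar + ε * (S false + h₂ fstar))
      = (⨅ f : Set.Icc (-1:ℝ) 1,
          max (h₁ f + ε * (S true + h₂ f)) (-h₁ f + ε * (S false + h₂ f))) := by
    haveI : Nonempty ↑(Set.Icc (-1:ℝ) 1) := ⟨⟨fstar, hfmem⟩⟩
    refine le_antisymm (le_ciInf fun x => hlb x x.2) ?_
    exact ciInf_le hbdd ⟨fstar, hfmem⟩
  refine ⟨fstar, hfmem, hfval, hinf, ?_⟩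
  rw [← hinf, hMstar, hfval]
  ring
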